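/- arXiv:1911.01502 — 2 statements merged into one kernel-verified Lean document; each statement's English description precedes it below -/
import Mathlib

section
/- Let k ≥ 1 and I_1, I_2, I_3 ⊆ [n] satisfy wt(I_J) ≤ (|J|−1)k for all nonempty J ⊆ [3], with equality wt(I_1,I_2,I_3) = 2k for J = [3]. Then the 3-wise intersection matrix M_{k,(I_1,I_2,I_3)} is nonsingular: it contains a 3k × 3k submatrix whose determinant is a nonzero polynomial in F_q[x_1,...,x_n]. -/
/-- Edges of the complete graph on `Fin t`: ordered pairs `(i,j)` with `i < j`. -/
abbrev Edge (t : ℕ) := {p : Fin t × Fin t // p.1 < p.2}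

/-- The `t`-wise intersection matrix `M_{k,(I_1,...,I_t)}` with `t = m+1` vertices:
the top rows form `B_t ⊗ I_k`, where `B_t` has one row for each triangle `Δ_{ij,last}`
(indexed by the edge `(i,j)` of `K_m`), and the bottom rows form the block-diagonal matrix
of Vandermonde blocks `V_k(I_i ∩ I_j)` over the edges `{i,j}` of `K_t`. -/
noncomputable def Mt (F : Type*) [Field F] (n m k : ℕ) (I : Fin (m + 1) → Finset (Fin n)) :
    Matrix ((Edge m × Fin k) ⊕ (Σ e : Edge (m + 1), {x : Fin n // x ∈ I e.1.1 ∩ I e.1.2}))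
      (Edge (m + 1) × Fin k) (MvPolynomial (Fin n) F) :=
  fun r c =>
    match r with
    | Sum.inl (p, a) =>
        if c.1.1.1 ∈ ({p.1.1.castSucc, p.1.2.castSucc, Fin.last m} : Finset (Fin (m + 1))) ∧
            c.1.1.2 ∈ ({p.1.1.castSucc, p.1.2.castSucc, Fin.last m} : Finset (Fin (m + 1))) ∧
            a = c.2 then 1 else 0
    | Sum.inr ⟨e, x⟩ => if e = c.1 then MvPolynomial.X x.1 ^ (c.2 : ℕ) else 0


open Finset MvPolynomial

namespace Stmt14

abbrev Cols (k : ℕ) := Edge 3 × Fin k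

def p0 : Edge 2 := ⟨(0, 1), by decide⟩
def E1 : Edge 3 := ⟨(0, 1), by decide⟩
def E2 : Edge 3 := ⟨(0, 2), by decide⟩
def E3 : Edge 3 := ⟨(1, 2), by decide⟩

abbrev Tset {n : ℕ} (I : Fin 3 → Finset (Fin n)) : Finset (Fin n) := I 0 ∩ I 1 ∩ I 2
abbrev Pe {n : ℕ} (I : Fin 3 → Finset (Fin n)) (e : Edge 3) : Finset (Fin n) := I e.1.1 ∩ I e.1.2

lemma edge3_cases : ∀ e : Edge 3, e = E1 ∨ e = E2 ∨ e = E3 := by decide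

lemma mem_Tset_iff {n : ℕ} {I : Fin 3 → Finset (Fin n)} {x : Fin n} :
    x ∈ Tset I ↔ ∀ v, x ∈ I v := by
  constructor
  · intro h v
    simp only [Tset, mem_inter] at h
    rcases (by decide : ∀ v : Fin 3, v = 0 ∨ v = 1 ∨ v = 2) v with rfl | rfl | rfl
    · exact h.1.1
    · exact h.1.2
    · exact h.2
  · intro h
    simp only [Tset, mem_inter]
    exact ⟨⟨h 0, h 1⟩, h 2⟩

lemma Tsub {n : ℕ} (I : Fin 3 → Finset (Fin n)) (e : Edge 3) : Tset I ⊆ Pe I e := by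
  intro x hx
  have := mem_Tset_iff.1 hx
  exact mem_inter.2 ⟨this _, this _⟩

lemma Pe_disj {n : ℕ} {I : Fin 3 → Finset (Fin n)} {e e' : Edge 3} (h : e ≠ e') {x : Fin n}
    (h1 : x ∈ Pe I e) (h2 : x ∈ Pe I e') : x ∈ Tset I := by
  have hc := (by decide : ∀ e e' : Edge 3, e ≠ e' → ∀ v : Fin 3,
      v = e.1.1 ∨ v = e.1.2 ∨ v = e'.1.1 ∨ v = e'.1.2) e e' h
  rw [mem_inter] at h1 h2
  refine mem_Tset_iff.2 fun v => ?_
  rcases hc v with rfl | rfl | rfl | rfl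
  · exact h1.1
  · exact h1.2
  · exact h2.1
  · exact h2.2

lemma Mt_inl {n k : ℕ} (F : Type*) [Field F] (I : Fin 3 → Finset (Fin n)) (p : Edge 2)
    (a : Fin k) (c : Cols k) :
    Mt F n 2 k I (Sum.inl (p, a)) c = if a = c.2 then 1 else 0 := by
  have hm : ∀ (q : Edge 2) (v : Fin 3),
      v ∈ ({q.1.1.castSucc, q.1.2.castSucc, Fin.last 2} : Finset (Fin 3)) := by decide
  show (if _ ∧ _ ∧ _ then _ else _) = _
  simp only [hm, true_and]

lemma Mt_inr {n k : ℕ} (F : Type*) [Field F] (I : Fin 3 → Finset (Fin n)) (e : Edge 3)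
    (x : {x : Fin n // x ∈ I e.1.1 ∩ I e.1.2}) (c : Cols k) :
    Mt F n 2 k I (Sum.inr ⟨e, x⟩) c = if e = c.1 then X x.1 ^ (c.2 : ℕ) else 0 := rfl


variable {n k : ℕ}

def fsel (s : ℕ) (I : Fin 3 → Finset (Fin n)) (Fe : Edge 3 → Finset ℕ)
    (u : ℕ → Fin n) (w : Edge 3 → ℕ → Fin n) (c : Cols k) :
    (Edge 2 × Fin k) ⊕ (Σ e : Edge 3, {x : Fin n // x ∈ I e.1.1 ∩ I e.1.2}) :=
  if s ≤ (c.2 : ℕ) then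
    if h : u ((c.2 : ℕ) - s) ∈ I c.1.1.1 ∩ I c.1.1.2 then Sum.inr ⟨c.1, ⟨_, h⟩⟩
    else Sum.inl (p0, c.2)
  else if (c.2 : ℕ) ∈ Fe c.1 then
    if h : w c.1 (c.2 : ℕ) ∈ I c.1.1.1 ∩ I c.1.1.2 then Sum.inr ⟨c.1, ⟨_, h⟩⟩
    else Sum.inl (p0, c.2)
  else Sum.inl (p0, c.2)

noncomputable def dexp (s : ℕ) (I : Fin 3 → Finset (Fin n)) (Fe : Edge 3 → Finset ℕ)
    (u : ℕ → Fin n) (w : Edge 3 → ℕ → Fin n) (c₀ c : Cols k) : Fin n →₀ ℕ :=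
  Sum.elim (fun _ => 0) (fun x => Finsupp.single x.2.1 ((c.2 : ℕ)))
    (fsel s I Fe u w c₀)

section CaseLemmas

variable {s : ℕ} {I : Fin 3 → Finset (Fin n)} {Fe : Edge 3 → Finset ℕ}
  {u : ℕ → Fin n} {w : Edge 3 → ℕ → Fin n}

lemma fsel_T (hk : k = s + (Tset I).card) (hu_mem : ∀ i < (Tset I).card, u i ∈ Tset I)
    (e : Edge 3) (j : Fin k) (hj : s ≤ (j : ℕ)) :
    fsel s I Fe u w (e, j) =
      Sum.inr ⟨e, ⟨u ((j : ℕ) - s), Tsub I e (hu_mem _ (by omega)) ⟩⟩ := by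
  have hm : u ((j : ℕ) - s) ∈ I e.1.1 ∩ I e.1.2 := Tsub I e (hu_mem _ (by omega))
  simp only [fsel, if_pos hj, dif_pos hm]

lemma fsel_F (hw_mem : ∀ e, ∀ j ∈ Fe e, w e j ∈ Pe I e \ Tset I)
    (e : Edge 3) (j : Fin k) (hjs : ¬ s ≤ (j : ℕ)) (hjF : (j : ℕ) ∈ Fe e) :
    fsel s I Fe u w (e, j) =
      Sum.inr ⟨e, ⟨w e (j : ℕ), (mem_sdiff.1 (hw_mem e _ hjF)).1⟩⟩ := by
  have hm : w e (j : ℕ) ∈ I e.1.1 ∩ I e.1.2 := (mem_sdiff.1 (hw_mem e _ hjF)).1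
  simp only [fsel, if_neg hjs, if_pos hjF, dif_pos hm]

lemma fsel_free (e : Edge 3) (j : Fin k) (hjs : ¬ s ≤ (j : ℕ)) (hjF : (j : ℕ) ∉ Fe e) :
    fsel s I Fe u w (e, j) = Sum.inl (p0, j) := by
  simp only [fsel, if_neg hjs, if_neg hjF]

lemma dexp_T (hk : k = s + (Tset I).card) (hu_mem : ∀ i < (Tset I).card, u i ∈ Tset I)
    (e : Edge 3) (j : Fin k) (hj : s ≤ (j : ℕ)) (c : Cols k) :
    dexp s I Fe u w (e, j) c = Finsupp.single (u ((j : ℕ) - s)) ((c.2 : ℕ)) := by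
  rw [dexp, fsel_T hk hu_mem e j hj]; rfl

lemma dexp_F (hw_mem : ∀ e, ∀ j ∈ Fe e, w e j ∈ Pe I e \ Tset I)
    (e : Edge 3) (j : Fin k) (hjs : ¬ s ≤ (j : ℕ)) (hjF : (j : ℕ) ∈ Fe e) (c : Cols k) :
    dexp s I Fe u w (e, j) c = Finsupp.single (w e (j : ℕ)) ((c.2 : ℕ)) := by
  rw [dexp, fsel_F hw_mem e j hjs hjF]; rfl

lemma dexp_free (e : Edge 3) (j : Fin k) (hjs : ¬ s ≤ (j : ℕ)) (hjF : (j : ℕ) ∉ Fe e)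
    (c : Cols k) : dexp s I Fe u w (e, j) c = 0 := by
  rw [dexp, fsel_free e j hjs hjF]; rfl

end CaseLemmas

section Eval

variable {s : ℕ} {I : Fin 3 → Finset (Fin n)} {Fe : Edge 3 → Finset ℕ}
  {u : ℕ → Fin n} {w : Edge 3 → ℕ → Fin n}

lemma dexp_eval_u (hk : k = s + (Tset I).card)
    (hu_mem : ∀ i < (Tset I).card, u i ∈ Tset I)
    (hu_inj : ∀ i < (Tset I).card, ∀ i' < (Tset I).card, u i = u i' → i = i')
    (hw_mem : ∀ e, ∀ j ∈ Fe e, w e j ∈ Pe I e \ Tset I)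
    (i : ℕ) (hi : i < (Tset I).card) (ji : Fin k) (hji : (ji : ℕ) = s + i)
    (e : Edge 3) (j : Fin k) (X : Cols k) :
    (dexp s I Fe u w (e, j) X) (u i) = if j = ji then ((X.2 : ℕ)) else 0 := by
  by_cases hs : s ≤ (j : ℕ)
  · rw [dexp_T hk hu_mem e j hs, Finsupp.single_apply]
    by_cases hjj : j = ji
    · subst hjj
      have h2 : (j : ℕ) - s = i := by omega
      rw [h2, if_pos rfl, if_pos rfl]
    · rw [if_neg, if_neg hjj]
      intro hcon
      have h1 : (j : ℕ) - s < (Tset I).card := by omega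
      have := hu_inj _ h1 _ hi hcon
      exact hjj (Fin.ext (by omega))
  · have hjne : j ≠ ji := by intro hcon; rw [hcon] at hs; omega
    rw [if_neg hjne]
    by_cases hf : (j : ℕ) ∈ Fe e
    · rw [dexp_F hw_mem e j hs hf, Finsupp.single_apply, if_neg]
      intro hcon
      have h1 := mem_sdiff.1 (hw_mem e _ hf)
      exact h1.2 (hcon ▸ hu_mem i hi)
    · rw [dexp_free e j hs hf]; rfl

lemma sum_dexp_u (hk : k = s + (Tset I).card)
    (hu_mem : ∀ i < (Tset I).card, u i ∈ Tset I)
    (hu_inj : ∀ i < (Tset I).card, ∀ i' < (Tset I).card, u i = u i' → i = i')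
    (hw_mem : ∀ e, ∀ j ∈ Fe e, w e j ∈ Pe I e \ Tset I)
    (i : ℕ) (hi : i < (Tset I).card) (ji : Fin k) (hji : (ji : ℕ) = s + i)
    (G : Cols k → Cols k) :
    ∑ c₀ : Cols k, (dexp s I Fe u w c₀ (G c₀)) (u i)
      = ∑ e : Edge 3, ((G (e, ji)).2 : ℕ) := by
  rw [Fintype.sum_prod_type]
  refine Finset.sum_congr rfl fun e _ => ?_
  have key : ∀ j : Fin k, (dexp s I Fe u w (e, j) (G (e, j))) (u i)
      = if j = ji then ((G (e, ji)).2 : ℕ) else 0 := by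
    intro j
    rcases eq_or_ne j ji with rfl | h
    · rw [dexp_eval_u hk hu_mem hu_inj hw_mem i hi j hji e j (G (e, j))]
    · rw [dexp_eval_u hk hu_mem hu_inj hw_mem i hi ji hji e j (G (e, j)), if_neg h, if_neg h]
  rw [Finset.sum_congr rfl fun j _ => key j]
  simp [Finset.sum_ite_eq']

lemma dexp_eval_w (hk : k = s + (Tset I).card)
    (hu_mem : ∀ i < (Tset I).card, u i ∈ Tset I)
    (hw_mem : ∀ e, ∀ j ∈ Fe e, w e j ∈ Pe I e \ Tset I)
    (hw_inj : ∀ e, ∀ j ∈ Fe e, ∀ j' ∈ Fe e, w e j = w e j' → j = j')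
    (hw_disj : ∀ e e', e ≠ e' → ∀ j ∈ Fe e, ∀ j' ∈ Fe e', w e j ≠ w e' j')
    (hFe_sub : ∀ e, Fe e ⊆ range s)
    (e0 : Edge 3) (j0 : Fin k) (hj0 : (j0 : ℕ) ∈ Fe e0)
    (e : Edge 3) (j : Fin k) (X : Cols k) :
    (dexp s I Fe u w (e, j) X) (w e0 (j0 : ℕ))
      = if (e, j) = (e0, j0) then ((X.2 : ℕ)) else 0 := by
  have hj0s : (j0 : ℕ) < s := mem_range.1 (hFe_sub e0 hj0)
  have hw0 := mem_sdiff.1 (hw_mem e0 _ hj0)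
  by_cases hs : s ≤ (j : ℕ)
  · rw [dexp_T hk hu_mem e j hs, Finsupp.single_apply, if_neg, if_neg]
    · intro hcon
      rw [Prod.mk.injEq] at hcon
      have : (j : ℕ) = (j0 : ℕ) := by rw [hcon.2]
      omega
    · intro hcon
      have h1 : (j : ℕ) - s < (Tset I).card := by omega
      exact hw0.2 (hcon ▸ hu_mem _ h1)
  · by_cases hf : (j : ℕ) ∈ Fe e
    · rw [dexp_F hw_mem e j hs hf, Finsupp.single_apply]
      rcases eq_or_ne (e, j) (e0, j0) with heq | hne
      · rw [Prod.mk.injEq] at heq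
        rw [if_pos (by rw [heq.1, heq.2]), if_pos (by rw [Prod.mk.injEq]; exact heq)]
      · rw [if_neg, if_neg hne]
        intro hcon
        by_cases he : e = e0
        · subst he
          have := hw_inj e _ hf _ hj0 hcon
          exact hne (by rw [Prod.mk.injEq]; exact ⟨rfl, Fin.ext this⟩)
        · exact hw_disj e e0 he _ hf _ hj0 hcon
    · rw [dexp_free e j hs hf, if_neg]
      · rfl
      · intro hcon
        rw [Prod.mk.injEq] at hcon
        apply hf
        rw [hcon.1, show (j : ℕ) = (j0 : ℕ) by rw [hcon.2]]
        exact hj0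

lemma sum_dexp_w (hk : k = s + (Tset I).card)
    (hu_mem : ∀ i < (Tset I).card, u i ∈ Tset I)
    (hw_mem : ∀ e, ∀ j ∈ Fe e, w e j ∈ Pe I e \ Tset I)
    (hw_inj : ∀ e, ∀ j ∈ Fe e, ∀ j' ∈ Fe e, w e j = w e j' → j = j')
    (hw_disj : ∀ e e', e ≠ e' → ∀ j ∈ Fe e, ∀ j' ∈ Fe e', w e j ≠ w e' j')
    (hFe_sub : ∀ e, Fe e ⊆ range s)
    (e0 : Edge 3) (j0 : Fin k) (hj0 : (j0 : ℕ) ∈ Fe e0)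
    (G : Cols k → Cols k) :
    ∑ c₀ : Cols k, (dexp s I Fe u w c₀ (G c₀)) (w e0 (j0 : ℕ))
      = ((G (e0, j0)).2 : ℕ) := by
  rw [Finset.sum_eq_single (e0, j0)]
  · rw [dexp_eval_w hk hu_mem hw_mem hw_inj hw_disj hFe_sub e0 j0 hj0 e0 j0 (G (e0, j0)),
      if_pos rfl]
  · intro b _ hb
    obtain ⟨e, j⟩ := b
    rw [dexp_eval_w hk hu_mem hw_mem hw_inj hw_disj hFe_sub e0 j0 hj0 e j (G (e, j)), if_neg hb]
  · intro h; exact absurd (Finset.mem_univ _) h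

end Eval

section Uniq

variable {s : ℕ} {I : Fin 3 → Finset (Fin n)} {Fe : Edge 3 → Finset ℕ}
  {u : ℕ → Fin n} {w : Edge 3 → ℕ → Fin n}

lemma uniq (F : Type*) [Field F]
    (hk : k = s + (Tset I).card)
    (hu_mem : ∀ i < (Tset I).card, u i ∈ Tset I)
    (hu_inj : ∀ i < (Tset I).card, ∀ i' < (Tset I).card, u i = u i' → i = i')
    (hw_mem : ∀ e, ∀ j ∈ Fe e, w e j ∈ Pe I e \ Tset I)
    (hw_inj : ∀ e, ∀ j ∈ Fe e, ∀ j' ∈ Fe e, w e j = w e j' → j = j')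
    (hw_disj : ∀ e e', e ≠ e' → ∀ j ∈ Fe e, ∀ j' ∈ Fe e', w e j ≠ w e' j')
    (hFe_sub : ∀ e, Fe e ⊆ range s)
    (hfree : ∀ j, j < s → ∀ e e' : Edge 3, j ∉ Fe e → j ∉ Fe e' → e = e')
    (g : Equiv.Perm (Cols k))
    (Hnz : ∀ c₀ : Cols k, Mt F n 2 k I (fsel s I Fe u w c₀) (g c₀) ≠ 0)
    (Hsum : ∑ c₀ : Cols k, dexp s I Fe u w c₀ (g c₀)
      = ∑ c₀ : Cols k, dexp s I Fe u w c₀ c₀) :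
    g = 1 := by
  have Hy : ∀ y : Fin n, ∑ c₀ : Cols k, (dexp s I Fe u w c₀ (g c₀)) y
      = ∑ c₀ : Cols k, (dexp s I Fe u w c₀ c₀) y := by
    intro y
    have h1 := congrArg (fun f : Fin n →₀ ℕ => f y) Hsum
    simpa using h1
  have hfst_T : ∀ e (j : Fin k), s ≤ (j : ℕ) → (g (e, j)).1 = e := by
    intro e j hj
    have H := Hnz (e, j)
    rw [fsel_T hk hu_mem e j hj, Mt_inr] at H
    by_contra hne
    exact H (if_neg fun hc => hne hc.symm)
  have hfst_F : ∀ e (j : Fin k), ¬ s ≤ (j : ℕ) → (j : ℕ) ∈ Fe e → (g (e, j)).1 = e := by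
    intro e j hjs hjF
    have H := Hnz (e, j)
    rw [fsel_F hw_mem e j hjs hjF, Mt_inr] at H
    by_contra hne
    exact H (if_neg fun hc => hne hc.symm)
  have hsnd_free : ∀ e (j : Fin k), ¬ s ≤ (j : ℕ) → (j : ℕ) ∉ Fe e → (g (e, j)).2 = j := by
    intro e j hjs hjF
    have H := Hnz (e, j)
    rw [fsel_free e j hjs hjF, Mt_inl] at H
    by_contra hne
    exact H (if_neg fun hc => hne hc.symm)
  have step1 : ∀ q i, i < (Tset I).card → (Tset I).card ≤ i + q →
      ∀ e (j : Fin k), (j : ℕ) = s + i → g (e, j) = (e, j) := by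
    intro q
    induction q with
    | zero => intro i hi hle; omega
    | succ q IH =>
      intro i hi hle e j hj
      have hbound : ∀ e' : Edge 3, ((g (e', j)).2 : ℕ) ≤ s + i := by
        intro e'
        by_contra hcon
        push_neg at hcon
        have hlt : ((g (e', j)).2 : ℕ) < k := (g (e', j)).2.isLt
        have hi2 : ((g (e', j)).2 : ℕ) - s < (Tset I).card := by omega
        have hstep := IH (((g (e', j)).2 : ℕ) - s) hi2 (by omega)
          (g (e', j)).1 (g (e', j)).2 (by omega)
        rw [Prod.mk.eta] at hstep
        have h2 := g.injective hstep
        have : ((g (e', j)).2 : ℕ) = (j : ℕ) := by rw [h2]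
        omega
      have hsum_i := Hy (u i)
      rw [sum_dexp_u hk hu_mem hu_inj hw_mem i hi j hj g,
        sum_dexp_u hk hu_mem hu_inj hw_mem i hi j hj (fun c => c)] at hsum_i
      have hforall := (Finset.sum_eq_sum_iff_of_le
        (fun e' _ => by simpa [hj] using hbound e')).1 hsum_i
      have h2 := hforall e (Finset.mem_univ e)
      exact Prod.ext (hfst_T e j (by omega)) (Fin.ext (by simpa using h2))
  have step2 : ∀ e (j : Fin k), ¬ s ≤ (j : ℕ) → (j : ℕ) ∈ Fe e → g (e, j) = (e, j) := by
    intro e j hjs hjF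
    have hs := Hy (w e (j : ℕ))
    rw [sum_dexp_w hk hu_mem hw_mem hw_inj hw_disj hFe_sub e j hjF g,
      sum_dexp_w hk hu_mem hw_mem hw_inj hw_disj hFe_sub e j hjF (fun c => c)] at hs
    exact Prod.ext (hfst_F e j hjs hjF) (Fin.ext (by simpa using hs))
  have step3 : ∀ e (j : Fin k), ¬ s ≤ (j : ℕ) → (j : ℕ) ∉ Fe e → g (e, j) = (e, j) := by
    intro e j hjs hjF
    have h2 : (g (e, j)).2 = j := hsnd_free e j hjs hjF
    have hg : g (e, j) = ((g (e, j)).1, j) := Prod.ext rfl h2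
    by_cases hF' : (j : ℕ) ∈ Fe (g (e, j)).1
    · have hstep := step2 (g (e, j)).1 j hjs hF'
      have hinj := g.injective (hg.trans hstep.symm)
      have he := congrArg Prod.fst hinj
      rw [hg, ← he]
    · have hee := hfree (j : ℕ) (by omega) e (g (e, j)).1 hjF hF'
      rw [hg, ← hee]
  apply Equiv.ext
  intro c
  obtain ⟨e, j⟩ := c
  show g (e, j) = (e, j)
  by_cases hs' : s ≤ (j : ℕ)
  · exact step1 (Tset I).card ((j : ℕ) - s) (by omega) (by omega) e j (by omega)
  · by_cases hF : (j : ℕ) ∈ Fe e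
    · exact step2 e j hs' hF
    · exact step3 e j hs' hF

end Uniq

section Det

variable {s : ℕ} {I : Fin 3 → Finset (Fin n)} {Fe : Edge 3 → Finset ℕ}
  {u : ℕ → Fin n} {w : Edge 3 → ℕ → Fin n}

lemma fsel_inj (hk : k = s + (Tset I).card)
    (hu_mem : ∀ i < (Tset I).card, u i ∈ Tset I)
    (hu_inj : ∀ i < (Tset I).card, ∀ i' < (Tset I).card, u i = u i' → i = i')
    (hw_mem : ∀ e, ∀ j ∈ Fe e, w e j ∈ Pe I e \ Tset I)
    (hw_inj : ∀ e, ∀ j ∈ Fe e, ∀ j' ∈ Fe e, w e j = w e j' → j = j')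
    (hfree : ∀ j, j < s → ∀ e e' : Edge 3, j ∉ Fe e → j ∉ Fe e' → e = e') :
    Function.Injective (fsel s I Fe u w (k := k)) := by
  rintro ⟨e, j⟩ ⟨e', j'⟩ h
  by_cases h1 : s ≤ (j : ℕ) <;> by_cases h1' : s ≤ (j' : ℕ)
  · rw [fsel_T hk hu_mem e j h1, fsel_T hk hu_mem e' j' h1'] at h
    have hab := Sum.inr.inj h
    have he : e = e' := congrArg Sigma.fst hab
    have hv : u ((j : ℕ) - s) = u ((j' : ℕ) - s) := congrArg (fun z => z.2.1) hab
    have := hu_inj _ (by omega) _ (by omega) hv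
    exact Prod.ext he (Fin.ext (show (j:ℕ) = (j':ℕ) by omega))
  · by_cases h2' : (j' : ℕ) ∈ Fe e'
    · rw [fsel_T hk hu_mem e j h1, fsel_F hw_mem e' j' h1' h2'] at h
      have hab := Sum.inr.inj h
      have hv : u ((j : ℕ) - s) = w e' ((j' : ℕ)) := congrArg (fun z => z.2.1) hab
      exact absurd (hv ▸ hu_mem ((j : ℕ) - s) (by omega))
        (mem_sdiff.1 (hw_mem e' _ h2')).2
    · rw [fsel_T hk hu_mem e j h1, fsel_free e' j' h1' h2'] at h
      exact absurd h (by simp)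
  · by_cases h2 : (j : ℕ) ∈ Fe e
    · rw [fsel_F hw_mem e j h1 h2, fsel_T hk hu_mem e' j' h1'] at h
      have hab := Sum.inr.inj h
      have hv : w e ((j : ℕ)) = u ((j' : ℕ) - s) := congrArg (fun z => z.2.1) hab
      exact absurd (hv.symm ▸ hu_mem ((j' : ℕ) - s) (by omega))
        (mem_sdiff.1 (hw_mem e _ h2)).2
    · rw [fsel_free e j h1 h2, fsel_T hk hu_mem e' j' h1'] at h
      exact absurd h (by simp)
  · by_cases h2 : (j : ℕ) ∈ Fe e <;> by_cases h2' : (j' : ℕ) ∈ Fe e'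
    · rw [fsel_F hw_mem e j h1 h2, fsel_F hw_mem e' j' h1' h2'] at h
      have hab := Sum.inr.inj h
      have he : e = e' := congrArg Sigma.fst hab
      subst he
      have hv : w e ((j : ℕ)) = w e ((j' : ℕ)) := congrArg (fun z => z.2.1) hab
      have := hw_inj e _ h2 _ h2' hv
      exact Prod.ext rfl (Fin.ext (show (j:ℕ) = (j':ℕ) by omega))
    · rw [fsel_F hw_mem e j h1 h2, fsel_free e' j' h1' h2'] at h
      exact absurd h (by simp)
    · rw [fsel_free e j h1 h2, fsel_F hw_mem e' j' h1' h2'] at h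
      exact absurd h (by simp)
    · rw [fsel_free e j h1 h2, fsel_free e' j' h1' h2'] at h
      simp only [Sum.inl.injEq, Prod.mk.injEq] at h
      obtain ⟨-, rfl⟩ := h
      exact Prod.ext (hfree (j : ℕ) (by omega) e e' h2 h2') rfl

lemma dexp_of_inl (c₀ c : Cols k) (z : Edge 2 × Fin k)
    (h : fsel s I Fe u w c₀ = Sum.inl z) : dexp s I Fe u w c₀ c = 0 := by
  rw [dexp, h]; rfl

lemma dexp_of_inr (c₀ c : Cols k)
    (z : Σ e : Edge 3, {x : Fin n // x ∈ I e.1.1 ∩ I e.1.2})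
    (h : fsel s I Fe u w c₀ = Sum.inr z) :
    dexp s I Fe u w c₀ c = Finsupp.single z.2.1 ((c.2 : ℕ)) := by
  rw [dexp, h]; rfl

lemma entry_eq (F : Type*) [Field F] (c₀ c : Cols k) :
    Mt F n 2 k I (fsel s I Fe u w c₀) c = 0 ∨
    Mt F n 2 k I (fsel s I Fe u w c₀) c = monomial (dexp s I Fe u w c₀ c) 1 := by
  rcases hf : fsel s I Fe u w c₀ with r | r
  · obtain ⟨p, a⟩ := r
    rw [Mt_inl, dexp_of_inl c₀ c _ hf]
    by_cases hac : a = c.2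
    · right; rw [if_pos hac, monomial_zero', C_1]
    · left; rw [if_neg hac]
  · obtain ⟨e, x⟩ := r
    rw [Mt_inr, dexp_of_inr c₀ c _ hf]
    by_cases hec : e = c.1
    · right; rw [if_pos hec, X_pow_eq_monomial]
    · left; rw [if_neg hec]

lemma diag_ne (F : Type*) [Field F] (hk : k = s + (Tset I).card)
    (hu_mem : ∀ i < (Tset I).card, u i ∈ Tset I)
    (hw_mem : ∀ e, ∀ j ∈ Fe e, w e j ∈ Pe I e \ Tset I) :
    ∀ c : Cols k, Mt F n 2 k I (fsel s I Fe u w c) c ≠ 0 := by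
  rintro ⟨e, j⟩
  by_cases h1 : s ≤ (j : ℕ)
  · rw [fsel_T hk hu_mem e j h1, Mt_inr, if_pos rfl]
    exact pow_ne_zero _ (X_ne_zero _)
  · by_cases h2 : (j : ℕ) ∈ Fe e
    · rw [fsel_F hw_mem e j h1 h2, Mt_inr, if_pos rfl]
      exact pow_ne_zero _ (X_ne_zero _)
    · rw [fsel_free e j h1 h2, Mt_inl, if_pos rfl]
      exact one_ne_zero

lemma prod_monomial (F : Type*) [Field F] {ι : Type*} (S : Finset ι)
    (d : ι → (Fin n →₀ ℕ)) :
    ∏ i ∈ S, (monomial (d i) (1 : F)) = monomial (∑ i ∈ S, d i) 1 := by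
  classical
  induction S using Finset.cons_induction with
  | empty => simp
  | cons a S ha IH => rw [Finset.prod_cons, Finset.sum_cons, IH, monomial_mul, one_mul]

lemma det_ne (F : Type*) [Field F]
    (hk : k = s + (Tset I).card)
    (hu_mem : ∀ i < (Tset I).card, u i ∈ Tset I)
    (hu_inj : ∀ i < (Tset I).card, ∀ i' < (Tset I).card, u i = u i' → i = i')
    (hw_mem : ∀ e, ∀ j ∈ Fe e, w e j ∈ Pe I e \ Tset I)
    (hw_inj : ∀ e, ∀ j ∈ Fe e, ∀ j' ∈ Fe e, w e j = w e j' → j = j')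
    (hw_disj : ∀ e e', e ≠ e' → ∀ j ∈ Fe e, ∀ j' ∈ Fe e', w e j ≠ w e' j')
    (hFe_sub : ∀ e, Fe e ⊆ range s)
    (hfree : ∀ j, j < s → ∀ e e' : Edge 3, j ∉ Fe e → j ∉ Fe e' → e = e') :
    ((Mt F n 2 k I).submatrix (fsel s I Fe u w) id).det ≠ 0 := by
  have hco : coeff (∑ c : Cols k, dexp s I Fe u w c c)
      (((Mt F n 2 k I).submatrix (fsel s I Fe u w) id).det) = 1 := by
    rw [Matrix.det_apply, coeff_sum]
    rw [Finset.sum_eq_single (1 : Equiv.Perm (Cols k))]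
    · simp only [Equiv.Perm.sign_one, one_smul, Equiv.Perm.one_apply,
        Matrix.submatrix_apply, id_eq]
      have hp : ∏ c : Cols k, Mt F n 2 k I (fsel s I Fe u w c) c
          = monomial (∑ c : Cols k, dexp s I Fe u w c c) 1 := by
        rw [← prod_monomial]
        refine Finset.prod_congr rfl fun c _ => ?_
        rcases entry_eq F c c with h | h
        · exact absurd h (diag_ne F hk hu_mem hw_mem c)
        · exact h
      rw [hp, coeff_monomial, if_pos rfl]
    · intro σ _ hσ
      rw [Units.smul_def, coeff_smul]
      simp only [Matrix.submatrix_apply, id_eq]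
      by_cases hz : ∀ c : Cols k, Mt F n 2 k I (fsel s I Fe u w (σ c)) c ≠ 0
      · have hp : ∏ c : Cols k, Mt F n 2 k I (fsel s I Fe u w (σ c)) c
            = monomial (∑ c : Cols k, dexp s I Fe u w (σ c) c) 1 := by
          rw [← prod_monomial]
          refine Finset.prod_congr rfl fun c _ => ?_
          rcases entry_eq F (σ c) c with h | h
          · exact absurd h (hz c)
          · exact h
        rw [hp, coeff_monomial, if_neg, smul_zero]
        intro hcon
        apply hσ
        have hg : σ⁻¹ = 1 := by
          apply uniq F hk hu_mem hu_inj hw_mem hw_inj hw_disj hFe_sub hfree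
          · intro c₀
            have := hz (σ⁻¹ c₀)
            rwa [← Equiv.Perm.mul_apply, mul_inv_cancel, Equiv.Perm.one_apply] at this
          · rw [← hcon]
            refine Fintype.sum_equiv σ⁻¹ _ _ fun c => ?_
            rw [← Equiv.Perm.mul_apply, mul_inv_cancel, Equiv.Perm.one_apply]
        rwa [inv_eq_one] at hg
      · push_neg at hz
        obtain ⟨c0, h0⟩ := hz
        have hpz : (∏ c : Cols k, Mt F n 2 k I (fsel s I Fe u w (σ c)) c) = 0 :=
          Finset.prod_eq_zero (Finset.mem_univ c0) h0
        rw [hpz, coeff_zero, smul_zero]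
    · intro h1
      exact absurd (Finset.mem_univ _) h1
  intro hcon
  rw [hcon, coeff_zero] at hco
  exact zero_ne_one hco

end Det

end Stmt14


open Stmt14 in
/-- Nonsingularity of 3-wise intersection matrices: if `wt(I_J) ≤ (|J|−1)k` for every
nonempty `J ⊆ [3]`, with equality `wt(I_1,I_2,I_3) = 2k` for `J = [3]`, then the 3-wise
intersection matrix `M_{k,(I_1,I_2,I_3)}` contains a `3k × 3k` submatrix whose determinant
is a nonzero polynomial. (Here the matrix is `Mt` with `m = 2`, i.e. `t = 3`.) -/
theorem stmt_14 (F : Type*) [Field F] (n k : ℕ) (hk : 1 ≤ k)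
    (I : Fin 3 → Finset (Fin n))
    (hwt : ∀ J : Finset (Fin 3), J.Nonempty →
      (∑ j ∈ J, ((I j).card : ℤ)) - ((J.biUnion I).card : ℤ) ≤ ((J.card : ℤ) - 1) * k)
    (heq : (∑ j, ((I j).card : ℤ)) - ((Finset.univ.biUnion I).card : ℤ) = 2 * k) :
    ∃ f : (Edge 3 × Fin k) →
        ((Edge 2 × Fin k) ⊕ (Σ e : Edge 3, {x : Fin n // x ∈ I e.1.1 ∩ I e.1.2})),
      Function.Injective f ∧ ((Mt F n 2 k I).submatrix f id).det ≠ 0 := by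
  classical
  have hpair : ∀ i j : Fin 3, i ≠ j → ((I i ∩ I j).card ≤ k) := by
    intro i j hij
    have h2 := hwt {i, j} ⟨i, Finset.mem_insert_self _ _⟩
    rw [Finset.sum_pair hij] at h2
    have hbu : ({i, j} : Finset (Fin 3)).biUnion I = I i ∪ I j := by
      rw [show ({i, j} : Finset (Fin 3)) = insert i {j} from rfl, Finset.biUnion_insert,
        Finset.singleton_biUnion]
    rw [hbu, Finset.card_pair hij] at h2
    have hiu := Finset.card_union_add_card_inter (I i) (I j)
    push_cast at h2
    omega
  have ha : ∀ e : Edge 3, (Pe I e).card ≤ k := fun e => hpair _ _ (ne_of_lt e.2)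
  have ht_le : ∀ e : Edge 3, (Tset I).card ≤ (Pe I e).card :=
    fun e => Finset.card_le_card (Tsub I e)
  have hU : (Finset.univ : Finset (Fin 3)).biUnion I = I 0 ∪ I 1 ∪ I 2 := by
    rw [show (Finset.univ : Finset (Fin 3)) = {0, 1, 2} by decide]
    rw [show ({0, 1, 2} : Finset (Fin 3)) = insert 0 (insert 1 {2}) from rfl,
      Finset.biUnion_insert, Finset.biUnion_insert, Finset.singleton_biUnion,
      ← Finset.union_assoc]
  have n1 := Finset.card_union_add_card_inter (I 0) (I 1)
  have n2 := Finset.card_union_add_card_inter (I 0 ∪ I 1) (I 2)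
  have n3 : (I 0 ∪ I 1) ∩ I 2 = (I 0 ∩ I 2) ∪ (I 1 ∩ I 2) :=
    Finset.union_inter_distrib_right _ _ _
  have n4 := Finset.card_union_add_card_inter (I 0 ∩ I 2) (I 1 ∩ I 2)
  have n5 : (I 0 ∩ I 2) ∩ (I 1 ∩ I 2) = Tset I := by
    ext x; simp only [Finset.mem_inter, Tset]; tauto
  rw [Fin.sum_univ_three, hU] at heq
  rw [n3] at n2
  rw [n5] at n4
  push_cast at heq
  have hsum3 : (Pe I E1).card + (Pe I E2).card + (Pe I E3).card
      = 2 * k + (Tset I).card := by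
    show (I 0 ∩ I 1).card + (I 0 ∩ I 2).card + (I 1 ∩ I 2).card = _
    omega
  have hn : Nonempty (Fin n) := by
    rcases Nat.eq_zero_or_pos n with h0 | h0
    · exfalso
      have hb : ∀ e : Edge 3, (Pe I e).card ≤ n := fun e =>
        le_trans (Finset.card_le_card (Finset.subset_univ _)) (by simp)
      have b1 := hb E1; have b2 := hb E2; have b3 := hb E3
      omega
    · exact ⟨⟨0, h0⟩⟩
  set t := (Tset I).card with ht
  have htk : t ≤ k := le_trans (ht_le E1) (ha E1)
  set s := k - t with hs
  have hk_eq : k = s + t := by omega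
  have a1 := ha E1; have a2 := ha E2; have a3 := ha E3
  have g1 := ht_le E1; have g2 := ht_le E2; have g3 := ht_le E3
  obtain ⟨L1, hL1sub, hL1card⟩ := Finset.exists_subset_card_eq (s := Finset.range s)
    (n := k - (Pe I E1).card) (by rw [Finset.card_range]; omega)
  obtain ⟨L2, hL2sub, hL2card⟩ := Finset.exists_subset_card_eq (s := Finset.range s \ L1)
    (n := k - (Pe I E2).card) (by
      rw [Finset.card_sdiff_of_subset hL1sub, Finset.card_range, hL1card]; omega)
  set L3 := (Finset.range s \ L1) \ L2 with hL3def
  have hL2sub' : L2 ⊆ Finset.range s := hL2sub.trans Finset.sdiff_subset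
  have hL3sub : L3 ⊆ Finset.range s := Finset.sdiff_subset.trans Finset.sdiff_subset
  have hL3card : L3.card = k - (Pe I E3).card := by
    rw [hL3def, Finset.card_sdiff_of_subset hL2sub, Finset.card_sdiff_of_subset hL1sub, Finset.card_range,
      hL1card, hL2card]
    omega
  have hd12 : Disjoint L1 L2 := by
    rw [Finset.disjoint_left]; intro x h1 h2
    exact (Finset.mem_sdiff.1 (hL2sub h2)).2 h1
  have hd13 : Disjoint L1 L3 := by
    rw [Finset.disjoint_left]; intro x h1 h3
    exact (Finset.mem_sdiff.1 (Finset.mem_sdiff.1 h3).1).2 h1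
  have hd23 : Disjoint L2 L3 := by
    rw [Finset.disjoint_left]; intro x h2 h3
    exact (Finset.mem_sdiff.1 h3).2 h2
  set Lf : Edge 3 → Finset ℕ :=
    fun e => if e = E1 then L1 else if e = E2 then L2 else L3 with hLf
  have hLf_vals : Lf E1 = L1 ∧ Lf E2 = L2 ∧ Lf E3 = L3 := by
    refine ⟨?_, ?_, ?_⟩ <;>
      simp [hLf, show E2 ≠ E1 by decide, show E3 ≠ E1 by decide, show E3 ≠ E2 by decide]
  have hLf_sub : ∀ e, Lf e ⊆ Finset.range s := by
    intro e
    rcases edge3_cases e with rfl | rfl | rfl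
    · rw [hLf_vals.1]; exact hL1sub
    · rw [hLf_vals.2.1]; exact hL2sub'
    · rw [hLf_vals.2.2]; exact hL3sub
  have hLf_card : ∀ e, (Lf e).card = k - (Pe I e).card := by
    intro e
    rcases edge3_cases e with rfl | rfl | rfl
    · rw [hLf_vals.1]; exact hL1card
    · rw [hLf_vals.2.1]; exact hL2card
    · rw [hLf_vals.2.2]; exact hL3card
  have hLf_disj : ∀ e e', e ≠ e' → Disjoint (Lf e) (Lf e') := by
    intro e e' hee
    rcases edge3_cases e with rfl | rfl | rfl <;> rcases edge3_cases e' with rfl | rfl | rfl <;>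
      first
        | exact absurd rfl hee
        | (rw [hLf_vals.1]; rw [hLf_vals.2.1]; exact hd12)
        | (rw [hLf_vals.1]; rw [hLf_vals.2.2]; exact hd13)
        | (rw [hLf_vals.2.1]; rw [hLf_vals.1]; exact hd12.symm)
        | (rw [hLf_vals.2.1]; rw [hLf_vals.2.2]; exact hd23)
        | (rw [hLf_vals.2.2]; rw [hLf_vals.1]; exact hd13.symm)
        | (rw [hLf_vals.2.2]; rw [hLf_vals.2.1]; exact hd23.symm)
  set Fe : Edge 3 → Finset ℕ := fun e => Finset.range s \ Lf e with hFeDef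
  have hFe_sub : ∀ e, Fe e ⊆ Finset.range s := fun e => Finset.sdiff_subset
  have hFe_card : ∀ e, (Fe e).card = (Pe I e).card - t := by
    intro e
    have h1 : (Fe e).card = s - (Lf e).card := by
      rw [hFeDef]
      rw [Finset.card_sdiff_of_subset (hLf_sub e), Finset.card_range]
    rw [h1, hLf_card e]
    have := ha e; have := ht_le e
    omega
  have hfree : ∀ j, j < s → ∀ e e' : Edge 3, j ∉ Fe e → j ∉ Fe e' → e = e' := by
    intro j hj e e' hje hje'
    have hjr : j ∈ Finset.range s := Finset.mem_range.2 hj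
    have hme : j ∈ Lf e := by
      by_contra hc
      exact hje (Finset.mem_sdiff.2 ⟨hjr, hc⟩)
    have hme' : j ∈ Lf e' := by
      by_contra hc
      exact hje' (Finset.mem_sdiff.2 ⟨hjr, hc⟩)
    by_contra hee
    exact Finset.disjoint_left.1 (hLf_disj e e' hee) hme hme'
  set u : ℕ → Fin n := fun i =>
    if h : i < t then ((Tset I).orderIsoOfFin ht.symm ⟨i, h⟩ : _).1 else hn.some with hu
  have hu_mem : ∀ i < t, u i ∈ Tset I := by
    intro i hi
    show (if h : i < t then _ else _) ∈ _
    rw [dif_pos hi]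
    exact ((Tset I).orderIsoOfFin ht.symm ⟨i, hi⟩).2
  have hu_inj : ∀ i < t, ∀ i' < t, u i = u i' → i = i' := by
    intro i hi i' hi' hx
    rw [hu] at hx
    dsimp only at hx
    rw [dif_pos hi, dif_pos hi'] at hx
    have h2 := ((Tset I).orderIsoOfFin ht.symm).injective (Subtype.ext hx)
    simpa using congrArg Fin.val h2
  have hcards : ∀ e, (Fe e).card = ((Pe I e) \ Tset I).card := by
    intro e
    rw [Finset.card_sdiff_of_subset (Tsub I e), hFe_card e]
  set ve : ∀ e : Edge 3, (Fe e : Finset ℕ) ≃ ((Pe I e) \ Tset I : Finset (Fin n)) :=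
    fun e => Finset.equivOfCardEq (hcards e) with hve
  set w : Edge 3 → ℕ → Fin n :=
    fun e j => if h : j ∈ Fe e then (ve e ⟨j, h⟩ : _).1 else hn.some with hw
  have hw_mem : ∀ e, ∀ j ∈ Fe e, w e j ∈ Pe I e \ Tset I := by
    intro e j hj
    show (if h : j ∈ Fe e then _ else _) ∈ _
    rw [dif_pos hj]
    exact (ve e ⟨j, hj⟩).2
  have hw_inj : ∀ e, ∀ j ∈ Fe e, ∀ j' ∈ Fe e, w e j = w e j' → j = j' := by
    intro e j hj j' hj' hx
    rw [hw] at hx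
    dsimp only at hx
    rw [dif_pos hj, dif_pos hj'] at hx
    have h2 := (ve e).injective (Subtype.ext hx)
    simpa using congrArg Subtype.val h2
  have hw_disj : ∀ e e', e ≠ e' → ∀ j ∈ Fe e, ∀ j' ∈ Fe e', w e j ≠ w e' j' := by
    intro e e' hee j hj j' hj' hx
    have h1 := hw_mem e j hj
    have h2 := hw_mem e' j' hj'
    rw [hx] at h1
    have hT := Pe_disj hee (Finset.mem_sdiff.1 h1).1 (Finset.mem_sdiff.1 h2).1
    exact (Finset.mem_sdiff.1 h1).2 hT
  have hk_eq' : k = s + (Tset I).card := by rw [← ht]; exact hk_eq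
  refine ⟨fsel s I Fe u w, fsel_inj hk_eq' hu_mem hu_inj hw_mem hw_inj hfree, ?_⟩
  exact det_ne F hk_eq' hu_mem hu_inj hw_mem hw_inj hw_disj hFe_sub hfree
end

section
/- Let n > k and let C be an [n,k]-RS code over F_q (q a power of 2) with evaluation vector α that is not ((L/(L+1))(1 − k/n), L) list-decodable for some L ≥ 2. Then there exist t with 3 ≤ t ≤ L+1 and subsets I_1,...,I_t ⊆ [n] such that (1) wt(I_J) ≤ (|J|−1)k for every nonempty J ⊆ [t], (2) wt(I_{[t]}) = (t−1)k, and (3) the evaluated t-wise intersection matrix M_{k,(I_1,...,I_t)}(α) does not have full column rank. -/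
set_option linter.unusedSectionVars false

namespace Stmt16Aux
open Finset

variable {ι X : Type*} [DecidableEq ι] [DecidableEq X]

/-- weight of a family over an index set. -/
def wt (I : ι → Finset X) (J : Finset ι) : ℤ :=
  (∑ j ∈ J, ((I j).card : ℤ)) - ((J.biUnion I).card : ℤ)

lemma sum_card_eq (I : ι → Finset X) (J : Finset ι) :
    (∑ j ∈ J, ((I j).card : ℤ)) =
      ∑ x ∈ J.biUnion I, ((J.filter fun j => x ∈ I j).card : ℤ) := by
  have h1 : ∀ j ∈ J, ((I j).card : ℤ) = ∑ x ∈ J.biUnion I, (if x ∈ I j then (1:ℤ) else 0) := by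
    intro j hj
    have : I j = (J.biUnion I).filter (fun x => x ∈ I j) := by
      ext x
      simp only [mem_filter, Finset.mem_biUnion]
      exact ⟨fun h => ⟨⟨j, hj, h⟩, h⟩, fun h => h.2⟩
    rw [Finset.sum_ite, Finset.sum_const, Finset.sum_const]
    simp [← this]
  rw [Finset.sum_congr rfl h1, Finset.sum_comm]
  refine Finset.sum_congr rfl fun x hx => ?_
  rw [Finset.sum_ite, Finset.sum_const, Finset.sum_const]
  simp

lemma wt_eq (I : ι → Finset X) (J : Finset ι) :
    wt I J = ∑ x ∈ J.biUnion I, (((J.filter fun j => x ∈ I j).card : ℤ) - 1) := by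
  rw [wt, sum_card_eq, Finset.sum_sub_distrib]
  simp

lemma mult_pos {I : ι → Finset X} {J : Finset ι} {x : X} (hx : x ∈ J.biUnion I) :
    0 < (J.filter fun j => x ∈ I j).card := by
  rw [Finset.card_pos]
  obtain ⟨j, hj, hxj⟩ := Finset.mem_biUnion.mp hx
  exact ⟨j, Finset.mem_filter.mpr ⟨hj, hxj⟩⟩

lemma wt_nonneg (I : ι → Finset X) (J : Finset ι) : 0 ≤ wt I J := by
  rw [wt_eq]
  refine Finset.sum_nonneg fun x hx => ?_
  have := mult_pos hx
  omega

lemma wt_mono {I I' : ι → Finset X} (hs : ∀ j, I' j ⊆ I j) (J : Finset ι) :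
    wt I' J ≤ wt I J := by
  rw [wt_eq, wt_eq]
  have hU : J.biUnion I' ⊆ J.biUnion I := by
    intro x hx
    obtain ⟨j, hj, hxj⟩ := Finset.mem_biUnion.mp hx
    exact Finset.mem_biUnion.mpr ⟨j, hj, hs j hxj⟩
  calc ∑ x ∈ J.biUnion I', (((J.filter fun j => x ∈ I' j).card : ℤ) - 1)
      ≤ ∑ x ∈ J.biUnion I', (((J.filter fun j => x ∈ I j).card : ℤ) - 1) := by
        refine Finset.sum_le_sum fun x _ => ?_
        have : (J.filter fun j => x ∈ I' j).card ≤ (J.filter fun j => x ∈ I j).card := by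
          refine Finset.card_le_card fun j hj => ?_
          rw [Finset.mem_filter] at hj ⊢
          exact ⟨hj.1, hs j hj.2⟩
        omega
    _ ≤ ∑ x ∈ J.biUnion I, (((J.filter fun j => x ∈ I j).card : ℤ) - 1) := by
        refine Finset.sum_le_sum_of_subset_of_nonneg hU fun x hx _ => ?_
        have := mult_pos hx
        omega

lemma exists_double {I : ι → Finset X} {J : Finset ι} (h : 0 < wt I J) :
    ∃ j₁ ∈ J, ∃ j₂ ∈ J, j₁ ≠ j₂ ∧ ∃ x, x ∈ I j₁ ∧ x ∈ I j₂ := by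
  rw [wt_eq] at h
  obtain ⟨x, hx, hterm⟩ : ∃ x ∈ J.biUnion I, 0 < ((J.filter fun j => x ∈ I j).card : ℤ) - 1 := by
    by_contra hc
    push_neg at hc
    have : ∑ x ∈ J.biUnion I, (((J.filter fun j => x ∈ I j).card : ℤ) - 1) ≤ 0 :=
      Finset.sum_nonpos hc
    omega
  have h2 : 1 < (J.filter fun j => x ∈ I j).card := by omega
  obtain ⟨j₁, hj₁, j₂, hj₂, hne⟩ := Finset.one_lt_card.mp h2
  rw [Finset.mem_filter] at hj₁ hj₂
  exact ⟨j₁, hj₁.1, j₂, hj₂.1, hne, x, hj₁.2, hj₂.2⟩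

lemma wt_erase {I : ι → Finset X} {J : Finset ι} {j₁ j₂ : ι} {x : X}
    (hj₁ : j₁ ∈ J) (hj₂ : j₂ ∈ J) (hne : j₁ ≠ j₂) (hx₁ : x ∈ I j₁) (hx₂ : x ∈ I j₂) :
    wt (Function.update I j₁ ((I j₁).erase x)) J = wt I J - 1 := by
  have hbu : J.biUnion (Function.update I j₁ ((I j₁).erase x)) = J.biUnion I := by
    ext y
    simp only [Finset.mem_biUnion]
    constructor
    · rintro ⟨j, hj, hy⟩
      by_cases hjj : j = j₁
      · subst hjj
        rw [Function.update_self] at hy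
        exact ⟨j, hj, Finset.mem_of_mem_erase hy⟩
      · rw [Function.update_of_ne hjj] at hy
        exact ⟨j, hj, hy⟩
    · rintro ⟨j, hj, hy⟩
      by_cases hjj : j = j₁
      · subst hjj
        by_cases hyx : y = x
        · subst hyx
          exact ⟨j₂, hj₂, by rw [Function.update_of_ne (Ne.symm hne)]; exact hx₂⟩
        · exact ⟨j, hj, by rw [Function.update_self]; exact Finset.mem_erase.mpr ⟨hyx, hy⟩⟩
      · exact ⟨j, hj, by rw [Function.update_of_ne hjj]; exact hy⟩
  have hsum : (∑ j ∈ J, (((Function.update I j₁ ((I j₁).erase x)) j).card : ℤ))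
      = (∑ j ∈ J, ((I j).card : ℤ)) - 1 := by
    rw [← Finset.add_sum_erase _ _ hj₁, ← Finset.add_sum_erase _ _ hj₁]
    have h1 : Function.update I j₁ ((I j₁).erase x) j₁ = (I j₁).erase x :=
      Function.update_self _ _ _
    have h2 : ∀ j ∈ J.erase j₁,
        ((Function.update I j₁ ((I j₁).erase x) j).card : ℤ) = ((I j).card : ℤ) := by
      intro j hj
      rw [Function.update_of_ne (Finset.ne_of_mem_erase hj)]
    rw [Finset.sum_congr rfl h2, h1, Finset.card_erase_of_mem hx₁]
    have : 0 < (I j₁).card := Finset.card_pos.mpr ⟨x, hx₁⟩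
    push_cast [Nat.cast_sub this]
    ring
  rw [wt, wt, hbu, hsum]
  ring

lemma shrink_aux (J : Finset ι) (target : ℤ) (h0 : 0 ≤ target) :
    ∀ N : ℕ, ∀ I : ι → Finset X, (∑ j ∈ J, (I j).card) = N → target ≤ wt I J →
    ∃ I' : ι → Finset X, (∀ j, I' j ⊆ I j) ∧ wt I' J = target := by
  intro N
  induction N using Nat.strong_induction_on with
  | _ N ih =>
    intro I hN hwt
    rcases eq_or_lt_of_le hwt with heq | hlt
    · exact ⟨I, fun j => le_rfl, heq.symm⟩
    · have hpos : 0 < wt I J := lt_of_le_of_lt h0 hlt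
      obtain ⟨j₁, hj₁, j₂, hj₂, hne, x, hx₁, hx₂⟩ := exists_double hpos
      set I₂ := Function.update I j₁ ((I j₁).erase x) with hI₂
      have hsub : ∀ j, I₂ j ⊆ I j := by
        intro j
        by_cases hjj : j = j₁
        · subst hjj; rw [hI₂, Function.update_self]; exact Finset.erase_subset _ _
        · rw [hI₂, Function.update_of_ne hjj]
      have hwt₂ : wt I₂ J = wt I J - 1 := wt_erase hj₁ hj₂ hne hx₁ hx₂
      have hcard : (∑ j ∈ J, (I₂ j).card) < N := by
        rw [← hN]
        refine Finset.sum_lt_sum (fun j hj => Finset.card_le_card (hsub j)) ⟨j₁, hj₁, ?_⟩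
        rw [hI₂, Function.update_self]
        exact Finset.card_lt_card (Finset.erase_ssubset hx₁)
      obtain ⟨I', hI'sub, hI'wt⟩ := ih _ hcard I₂ rfl (by omega)
      exact ⟨I', fun j => (hI'sub j).trans (hsub j), hI'wt⟩

lemma shrink (J : Finset ι) (target : ℤ) (h0 : 0 ≤ target) (I : ι → Finset X)
    (hwt : target ≤ wt I J) :
    ∃ I' : ι → Finset X, (∀ j, I' j ⊆ I j) ∧ wt I' J = target :=
  shrink_aux J target h0 _ I rfl hwt

lemma wt_singleton (I : ι → Finset X) (j : ι) : wt I {j} = 0 := by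
  simp [wt]

lemma wt_pair (I : ι → Finset X) {i j : ι} (hij : i ≠ j) :
    wt I {i, j} = ((I i ∩ I j).card : ℤ) := by
  rw [wt, Finset.sum_pair hij]
  have : ({i, j} : Finset ι).biUnion I = I i ∪ I j := by
    simp [Finset.biUnion_insert]
  rw [this]
  have := Finset.card_union_add_card_inter (I i) (I j)
  omega

end Stmt16Aux


/-- The `[n,k]`-RS code defined by the evaluation vector `α`. -/
def RScode (F : Type*) [Field F] (n k : ℕ) (α : Fin n → F) : Set (Fin n → F) :=
  {c | ∃ f : Polynomial F, f.degree < (k : WithBot ℕ) ∧ c = fun i => f.eval (α i)}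

/-- `C` is `(r, L)` list-decodable: every Hamming ball of radius `r·n` contains at most `L`
codewords of `C`. -/
def listDecodable {n : ℕ} {Q : Type*} [DecidableEq Q] (C : Set (Fin n → Q)) (r : ℝ)
    (L : ℕ) : Prop :=
  ∀ y : Fin n → Q, Nat.card {c : Fin n → Q // c ∈ C ∧ (hammingDist y c : ℝ) ≤ r * n} ≤ L

open Stmt16Aux

/-- If an `[n,k]`-RS code over a field of characteristic 2 is not
`((L/(L+1))(1−k/n), L)` list-decodable for some `L ≥ 2`, then there exist `t` with
`3 ≤ t ≤ L+1` (here `t = m+1` with `2 ≤ m ≤ L`) and subsets `I_1,...,I_t ⊆ [n]` such that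
(1) `wt(I_J) ≤ (|J|−1)k` for every nonempty `J ⊆ [t]`, (2) `wt(I_{[t]}) = (t−1)k`, and
(3) the evaluated `t`-wise intersection matrix `M_{k,(I_1,...,I_t)}(α)` does not have full
column rank (its columns are linearly dependent, i.e. it has a nonzero kernel vector). -/
theorem stmt_16 (n k L : ℕ) (hk : 0 < k) (hkn : k < n) (hL : 2 ≤ L)
    (F : Type*) [Field F] [Fintype F] [DecidableEq F] [CharP F 2]
    (α : Fin n → F) (hα : Function.Injective α)
    (h : ¬ listDecodable (RScode F n k α) (((L : ℝ) / (L + 1)) * (1 - (k : ℝ) / n)) L) :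
    ∃ m : ℕ, 2 ≤ m ∧ m ≤ L ∧ ∃ I : Fin (m + 1) → Finset (Fin n),
      (∀ J : Finset (Fin (m + 1)), J.Nonempty →
        (∑ j ∈ J, ((I j).card : ℤ)) - ((J.biUnion I).card : ℤ) ≤ ((J.card : ℤ) - 1) * k) ∧
      (∑ j, ((I j).card : ℤ)) - ((Finset.univ.biUnion I).card : ℤ) = m * k ∧
      ∃ v : Edge (m + 1) × Fin k → F, v ≠ 0 ∧
        ((Mt F n m k I).map (MvPolynomial.eval α)).mulVec v = 0 := by
  classical
  -- Step 1: get a center y and L+1 distinct codewords in the ball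
  rw [listDecodable] at h
  push_neg at h
  obtain ⟨y, hy⟩ := h
  set r : ℝ := ((L : ℝ) / (L + 1)) * (1 - (k : ℝ) / n) with hr
  set S := {c : Fin n → F // c ∈ RScode F n k α ∧ (hammingDist y c : ℝ) ≤ r * n} with hS
  have : Finite S := Subtype.finite
  have : Fintype S := Fintype.ofFinite S
  rw [Nat.card_eq_fintype_card] at hy
  have hcard : Fintype.card (Fin (L+1)) ≤ Fintype.card S := by
    simp only [Fintype.card_fin]; omega
  obtain ⟨emb⟩ := Function.Embedding.nonempty_of_card_le hcard
  set c : Fin (L+1) → (Fin n → F) := fun i => (emb i).1 with hc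
  have hcinj : Function.Injective c := fun i j hij => emb.injective (Subtype.ext hij)
  have hcmem : ∀ i, c i ∈ RScode F n k α := fun i => (emb i).2.1
  have hcdist : ∀ i, (hammingDist y (c i) : ℝ) ≤ r * n := fun i => (emb i).2.2
  choose f hfdeg hfc using fun i => hcmem i
  have hfinj : Function.Injective f := by
    intro i j hij
    apply hcinj
    rw [hfc i, hfc j, hij]
  -- Step 2: agreement sets
  set I0 : Fin (L+1) → Finset (Fin n) := fun i => Finset.univ.filter (fun x => c i x = y x)
    with hI0
  have hI0card : ∀ i, n ≤ (I0 i).card + hammingDist y (c i) := by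
    intro i
    have h1 := Finset.card_filter_add_card_filter_not (s := (Finset.univ : Finset (Fin n)))
      (fun x => c i x = y x)
    rw [Finset.card_univ, Fintype.card_fin] at h1
    have h2 : hammingDist y (c i) = (Finset.univ.filter (fun x => ¬ c i x = y x)).card := by
      rw [hammingDist]
      congr 1
      ext x
      simp [eq_comm]
    have h3 : (I0 i).card = (Finset.univ.filter (fun x => c i x = y x)).card := rfl
    omega
  have hmemI0 : ∀ i x, x ∈ I0 i ↔ (f i).eval (α x) = y x := by
    intro i x
    rw [hI0]
    simp only [Finset.mem_filter, Finset.mem_univ, true_and]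
    rw [hfc i]
  -- Step 3: sum of agreement set sizes
  have hn0 : (0:ℝ) < n := by exact_mod_cast (by omega : 0 < n)
  have hsumI0 : ((n:ℤ) + L * k) ≤ ∑ i, ((I0 i).card : ℤ) := by
    have hreal : ((n:ℝ) + L * k) ≤ ∑ i, ((I0 i).card : ℝ) := by
      have hone : ∀ i : Fin (L+1), (n:ℝ) - r * n ≤ ((I0 i).card : ℝ) := by
        intro i
        have h1 := hI0card i
        have h2 := hcdist i
        have : (n:ℝ) ≤ ((I0 i).card : ℝ) + (hammingDist y (c i) : ℝ) := by exact_mod_cast h1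
        linarith
      have hsum := Finset.sum_le_sum (fun i (_ : i ∈ Finset.univ) => hone i)
      rw [Finset.sum_const, Finset.card_univ, Fintype.card_fin] at hsum
      have hrn : ((L:ℝ)+1) * ((n:ℝ) - r * n) = (n:ℝ) + L * k := by
        rw [hr]
        field_simp
        ring
      calc ((n:ℝ) + L * k) = ((L:ℝ)+1) * ((n:ℝ) - r * n) := hrn.symm
        _ = (L+1 : ℕ) • ((n:ℝ) - r * n) := by push_cast [nsmul_eq_mul]; ring
        _ ≤ ∑ i, ((I0 i).card : ℝ) := hsum
    exact_mod_cast hreal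
  -- Step 4: weight of the full family is at least L*k
  have hwtfull : ((L:ℤ)) * k ≤ wt I0 Finset.univ := by
    rw [wt]
    have : ((Finset.univ.biUnion I0).card : ℤ) ≤ n := by
      have h5 := Finset.card_le_univ (Finset.univ.biUnion I0)
      rw [Fintype.card_fin] at h5
      exact_mod_cast h5
    omega
  -- Step 5: pairwise intersections are small
  have hpair : ∀ i j : Fin (L+1), i ≠ j → ((I0 i ∩ I0 j).card : ℤ) < k := by
    intro i j hij
    have hne : f i - f j ≠ 0 := sub_ne_zero.mpr (fun hh => hij (hfinj hh))
    have hdeg : (f i - f j).natDegree < k := by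
      rw [Polynomial.natDegree_lt_iff_degree_lt hne]
      exact lt_of_le_of_lt (Polynomial.degree_sub_le _ _) (max_lt (hfdeg i) (hfdeg j))
    have hcard : (I0 i ∩ I0 j).card ≤ (f i - f j).roots.toFinset.card := by
      refine Finset.card_le_card_of_injOn α (fun x hx => ?_) (fun a _ b _ hab => hα hab)
      rw [Finset.mem_coe, Finset.mem_inter] at hx
      rw [Finset.mem_coe, Multiset.mem_toFinset, Polynomial.mem_roots hne]
      show (f i - f j).eval (α x) = 0
      rw [Polynomial.eval_sub, (hmemI0 i x).mp hx.1, (hmemI0 j x).mp hx.2, sub_self]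
    have hlt : (I0 i ∩ I0 j).card < k :=
      lt_of_le_of_lt (hcard.trans ((Multiset.toFinset_card_le _).trans
        (Polynomial.card_roots' _))) hdeg
    exact_mod_cast hlt
  -- Step 6: minimal heavy subset
  set P : Finset (Fin (L+1)) → Prop := fun J => 2 ≤ J.card ∧ ((J.card:ℤ)-1) * k ≤ wt I0 J
    with hP
  have hPuniv : P Finset.univ := by
    rw [hP]
    refine ⟨by rw [Finset.card_univ, Fintype.card_fin]; omega, ?_⟩
    rw [Finset.card_univ, Fintype.card_fin]
    push_cast
    calc ((L:ℤ)+1-1)*k = L*k := by ring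
      _ ≤ wt I0 Finset.univ := hwtfull
  obtain ⟨J, hJmem, hJmin⟩ := Finset.exists_min_image (Finset.univ.filter P) Finset.card
    ⟨Finset.univ, Finset.mem_filter.mpr ⟨Finset.mem_univ _, hPuniv⟩⟩
  obtain ⟨hJ2, hJwt⟩ : 2 ≤ J.card ∧ ((J.card:ℤ)-1) * k ≤ wt I0 J :=
    (Finset.mem_filter.mp hJmem).2
  have hJ3 : 3 ≤ J.card := by
    rcases Nat.lt_or_ge J.card 3 with hlt | hge
    · exfalso
      have hc2 : J.card = 2 := by omega
      obtain ⟨i, j, hij, hJeq⟩ := Finset.card_eq_two.mp hc2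
      have hp := hpair i j hij
      rw [hc2, hJeq, wt_pair I0 hij] at hJwt
      push_cast at hJwt
      omega
    · exact hge
  have hJle : J.card ≤ L + 1 := by
    have := Finset.card_le_univ J
    rwa [Fintype.card_fin] at this
  have hproper : ∀ J' : Finset (Fin (L+1)), J' ⊆ J → J'.Nonempty → J' ≠ J →
      wt I0 J' ≤ ((J'.card:ℤ)-1) * k := by
    intro J' hsub hne hnej
    rcases Nat.lt_or_ge J'.card 2 with hlt | hge
    · have hc1 : J'.card = 1 := by
        have hp := Finset.card_pos.mpr hne
        omega
      obtain ⟨j, hj⟩ := Finset.card_eq_one.mp hc1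
      rw [hc1, hj, wt_singleton]
      norm_num
    · have hcardlt : J'.card < J.card :=
        Finset.card_lt_card (Finset.ssubset_iff_subset_ne.mpr ⟨hsub, hnej⟩)
      have hnotP : ¬ (2 ≤ J'.card ∧ ((J'.card:ℤ)-1) * k ≤ wt I0 J') := by
        intro hPJ'
        have := hJmin J' (Finset.mem_filter.mpr ⟨Finset.mem_univ _, hPJ'⟩)
        omega
      push_neg at hnotP
      exact (hnotP hge).le
  -- Step 7: shrink to exact weight
  have htarget0 : (0:ℤ) ≤ ((J.card:ℤ)-1) * k :=
    mul_nonneg (by omega) (by omega)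
  obtain ⟨I1, hI1sub, hI1wt⟩ := shrink J (((J.card:ℤ)-1) * k) htarget0 I0 hJwt
  have hI1cond : ∀ J' : Finset (Fin (L+1)), J' ⊆ J → J'.Nonempty →
      wt I1 J' ≤ ((J'.card:ℤ)-1) * k := by
    intro J' hsub hne
    rcases eq_or_ne J' J with heq | hnej
    · subst heq; rw [hI1wt]
    · exact (wt_mono hI1sub J').trans (hproper J' hsub hne hnej)
  -- Step 8: reindex
  set m : ℕ := J.card - 1 with hm
  have hJcard : J.card = m + 1 := by omega
  have hm2 : 2 ≤ m := by omega
  have hmL : m ≤ L := by omega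
  set σ : Fin (m+1) → Fin (L+1) := fun i => ((J.orderIsoOfFin hJcard) i : Fin (L+1)) with hσ
  have hσinj : Function.Injective σ := fun a b hab => by
    have := (J.orderIsoOfFin hJcard).injective (Subtype.ext hab)
    exact this
  have hσmem : ∀ i, σ i ∈ J := fun i => ((J.orderIsoOfFin hJcard) i).2
  have himage : Finset.univ.image σ = J := by
    refine Finset.eq_of_subset_of_card_le (fun x hx => ?_) ?_
    · obtain ⟨i, _, hi⟩ := Finset.mem_image.mp hx
      exact hi ▸ hσmem i
    · rw [Finset.card_image_of_injective _ hσinj, Finset.card_univ, Fintype.card_fin]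
      omega
  set Ifin : Fin (m+1) → Finset (Fin n) := fun i => I1 (σ i) with hIfin
  have htransfer : ∀ J' : Finset (Fin (m+1)), wt Ifin J' = wt I1 (J'.image σ) ∧
      (J'.image σ).card = J'.card := by
    intro J'
    have hbu : (J'.image σ).biUnion I1 = J'.biUnion Ifin := by
      ext x
      simp only [Finset.mem_biUnion, Finset.mem_image]
      constructor
      · rintro ⟨j, ⟨i, hi, rfl⟩, hx⟩
        exact ⟨i, hi, hx⟩
      · rintro ⟨i, hi, hx⟩
        exact ⟨σ i, ⟨i, hi, rfl⟩, hx⟩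
    constructor
    · rw [wt, wt, hbu, Finset.sum_image (fun a _ b _ h => hσinj h)]
    · exact Finset.card_image_of_injective _ hσinj
  refine ⟨m, hm2, hmL, Ifin, ?_, ?_, ?_⟩
  · intro J' hne
    obtain ⟨ht1, ht2⟩ := htransfer J'
    show wt Ifin J' ≤ ((J'.card:ℤ)-1) * k
    rw [ht1, ← ht2]
    refine hI1cond _ ?_ ?_
    · rw [← himage]
      exact Finset.image_subset_image (Finset.subset_univ J')
    · obtain ⟨i, hi⟩ := hne
      exact ⟨σ i, Finset.mem_image_of_mem σ hi⟩
  · obtain ⟨ht1, ht2⟩ := htransfer Finset.univ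
    show wt Ifin Finset.univ = (m:ℤ) * k
    rw [ht1, himage, hI1wt, hJcard]
    push_cast
    ring
  · -- Step 9: the kernel vector
    set g : Edge (m+1) → Polynomial F := fun e => f (σ e.1.1) + f (σ e.1.2) with hg
    have hgne : ∀ e : Edge (m+1), g e ≠ 0 := by
      intro e he
      have hne : σ e.1.1 ≠ σ e.1.2 := fun hh => absurd (hσinj hh) (ne_of_lt e.2)
      have : f (σ e.1.1) = f (σ e.1.2) := by
        have h2 : ∀ b : ℕ, (f (σ e.1.1)).coeff b = (f (σ e.1.2)).coeff b := by
          intro b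
          have := congrArg (fun q => Polynomial.coeff q b) he
          simp only [hg, Polynomial.coeff_add, Polynomial.coeff_zero] at this
          have hchar := CharTwo.add_self_eq_zero (R := F) ((f (σ e.1.2)).coeff b)
          linear_combination this - hchar
        exact Polynomial.ext h2
      exact hne (hfinj this)
    have hgdeg : ∀ e : Edge (m+1), (g e).natDegree < k := by
      intro e
      rw [Polynomial.natDegree_lt_iff_degree_lt (hgne e)]
      exact lt_of_le_of_lt (Polynomial.degree_add_le _ _)
        (max_lt (hfdeg (σ e.1.1)) (hfdeg (σ e.1.2)))
    have hgval : ∀ (e : Edge (m+1)) (x : Fin n), x ∈ Ifin e.1.1 ∩ Ifin e.1.2 →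
        (g e).eval (α x) = 0 := by
      intro e x hx
      rw [Finset.mem_inter] at hx
      have h1 : (f (σ e.1.1)).eval (α x) = y x :=
        (hmemI0 _ x).mp (hI1sub (σ e.1.1) hx.1)
      have h2 : (f (σ e.1.2)).eval (α x) = y x :=
        (hmemI0 _ x).mp (hI1sub (σ e.1.2) hx.2)
      rw [hg]
      simp only [Polynomial.eval_add, h1, h2]
      exact CharTwo.add_self_eq_zero _
    set v : Edge (m+1) × Fin k → F := fun c => (g c.1).coeff c.2 with hv
    refine ⟨v, ?_, ?_⟩
    · -- v ≠ 0
      have h01 : (0 : Fin (m+1)) < 1 := by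
        rw [Fin.lt_def, Fin.val_zero, Fin.val_one']
        rw [Nat.mod_eq_of_lt (by omega)]
        omega
      set e0 : Edge (m+1) := ⟨(0, 1), h01⟩ with he0
      intro hv0
      have := congrFun hv0 (e0, ⟨(g e0).natDegree, hgdeg e0⟩)
      simp only [hv, Pi.zero_apply] at this
      exact Polynomial.leadingCoeff_ne_zero.mpr (hgne e0) this
    · -- mulVec = 0
      funext row
      rw [Pi.zero_apply]
      cases row with
      | inl pa =>
        obtain ⟨p, a⟩ := pa
        show (∑ c : Edge (m+1) × Fin k,
          ((Mt F n m k Ifin).map (MvPolynomial.eval α)) (Sum.inl (p, a)) c * v c) = 0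
        have hent : ∀ c : Edge (m+1) × Fin k,
            ((Mt F n m k Ifin).map (MvPolynomial.eval α)) (Sum.inl (p, a)) c =
            if c.1.1.1 ∈ ({p.1.1.castSucc, p.1.2.castSucc, Fin.last m} : Finset (Fin (m+1))) ∧
               c.1.1.2 ∈ ({p.1.1.castSucc, p.1.2.castSucc, Fin.last m} : Finset (Fin (m+1))) ∧
               a = c.2 then 1 else 0 := by
          intro c
          have hMt : Mt F n m k Ifin (Sum.inl (p, a)) c =
              if c.1.1.1 ∈ ({p.1.1.castSucc, p.1.2.castSucc, Fin.last m} :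
                  Finset (Fin (m+1))) ∧
                 c.1.1.2 ∈ ({p.1.1.castSucc, p.1.2.castSucc, Fin.last m} :
                  Finset (Fin (m+1))) ∧
                 a = c.2 then 1 else 0 := rfl
          rw [Matrix.map_apply, hMt, apply_ite (MvPolynomial.eval α), map_one, map_zero]
        simp only [hent]
        rw [Fintype.sum_prod_type]
        set T : Finset (Fin (m+1)) := {p.1.1.castSucc, p.1.2.castSucc, Fin.last m} with hT
        have hinner : ∀ e' : Edge (m+1),
            (∑ b : Fin k, (if e'.1.1 ∈ T ∧ e'.1.2 ∈ T ∧ a = b then (1:F) else 0) * v (e', b))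
            = if e'.1.1 ∈ T ∧ e'.1.2 ∈ T then v (e', a) else 0 := by
          intro e'
          by_cases hAB : e'.1.1 ∈ T ∧ e'.1.2 ∈ T
          · rw [if_pos hAB]
            simp only [hAB.1, hAB.2, true_and]
            rw [Finset.sum_eq_single a]
            · rw [if_pos rfl, one_mul]
            · intro b _ hb
              rw [if_neg (fun hh => hb hh.symm), zero_mul]
            · intro ha
              exact absurd (Finset.mem_univ a) ha
          · rw [if_neg hAB]
            refine Finset.sum_eq_zero fun b _ => ?_
            rw [if_neg (fun hh => hAB ⟨hh.1, hh.2.1⟩), zero_mul]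
        rw [Finset.sum_congr rfl (fun e' _ => hinner e')]
        -- the three edges in the triangle
        have hij : p.1.1.castSucc < p.1.2.castSucc := by
          rw [Fin.castSucc_lt_castSucc_iff]; exact p.2
        have hil : p.1.1.castSucc < Fin.last m := Fin.castSucc_lt_last _
        have hjl : p.1.2.castSucc < Fin.last m := Fin.castSucc_lt_last _
        set E1 : Edge (m+1) := ⟨(p.1.1.castSucc, p.1.2.castSucc), hij⟩ with hE1
        set E2 : Edge (m+1) := ⟨(p.1.1.castSucc, Fin.last m), hil⟩ with hE2
        set E3 : Edge (m+1) := ⟨(p.1.2.castSucc, Fin.last m), hjl⟩ with hE3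
        have hsub : ({E1, E2, E3} : Finset (Edge (m+1))) ⊆ Finset.univ :=
          Finset.subset_univ _
        have hzero : ∀ e' ∈ (Finset.univ : Finset (Edge (m+1))),
            e' ∉ ({E1, E2, E3} : Finset (Edge (m+1))) →
            (if e'.1.1 ∈ T ∧ e'.1.2 ∈ T then v (e', a) else 0) = 0 := by
          rintro ⟨⟨x1, x2⟩, hx⟩ _ hmem
          rw [if_neg]
          rintro ⟨hx1, hx2⟩
          apply hmem
          simp only [hT, Finset.mem_insert, Finset.mem_singleton] at hx1 hx2
          simp only [Finset.mem_insert, Finset.mem_singleton, hE1, hE2, hE3]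
          simp only [Subtype.mk.injEq, Prod.mk.injEq]
          rcases hx1 with h1 | h1 | h1 <;> rcases hx2 with h2 | h2 | h2 <;>
            subst h1 <;> subst h2 <;> simp only [Prod.fst, Prod.snd] at hx
          · exact absurd hx (lt_irrefl _)
          · exact Or.inl ⟨rfl, rfl⟩
          · exact Or.inr (Or.inl ⟨rfl, rfl⟩)
          · exact absurd (hx.trans hij) (lt_irrefl _)
          · exact absurd hx (lt_irrefl _)
          · exact Or.inr (Or.inr ⟨rfl, rfl⟩)
          · exact absurd (hx.trans hil) (lt_irrefl _)
          · exact absurd (hx.trans hjl) (lt_irrefl _)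
          · exact absurd hx (lt_irrefl _)
        rw [← Finset.sum_subset hsub hzero]
        have hne12 : E1 ≠ E2 := by
          intro hh
          rw [hE1, hE2, Subtype.mk.injEq, Prod.mk.injEq] at hh
          exact absurd (hh.2 ▸ hjl) (lt_irrefl _)
        have hne13 : E1 ≠ E3 := by
          intro hh
          rw [hE1, hE3, Subtype.mk.injEq, Prod.mk.injEq] at hh
          exact absurd (hh.1 ▸ hij) (lt_irrefl _)
        have hne23 : E2 ≠ E3 := by
          intro hh
          rw [hE2, hE3, Subtype.mk.injEq, Prod.mk.injEq] at hh
          exact absurd (hh.1 ▸ hij) (lt_irrefl _)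
        rw [Finset.sum_insert (by simp [hne12, hne13]),
          Finset.sum_insert (by simp [hne23]), Finset.sum_singleton]
        have hm1 : ∀ E : Edge (m+1), E.1.1 ∈ T → E.1.2 ∈ T →
            (if E.1.1 ∈ T ∧ E.1.2 ∈ T then v (E, a) else 0) = v (E, a) := by
          intro E h1 h2
          rw [if_pos ⟨h1, h2⟩]
        rw [hm1 E1 (by simp [hT, hE1]) (by simp [hT, hE1]), hm1 E2 (by simp [hT, hE2]) (by simp [hT, hE2]),
          hm1 E3 (by simp [hT, hE3]) (by simp [hT, hE3])]
        simp only [hv, hg, hE1, hE2, hE3, Polynomial.coeff_add]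
        have hc := CharTwo.add_self_eq_zero (R := F)
        linear_combination hc ((f (σ p.1.1.castSucc)).coeff a) +
          hc ((f (σ p.1.2.castSucc)).coeff a) + hc ((f (σ (Fin.last m))).coeff a)
      | inr ex =>
        obtain ⟨e, x⟩ := ex
        show (∑ c : Edge (m+1) × Fin k,
          ((Mt F n m k Ifin).map (MvPolynomial.eval α)) (Sum.inr ⟨e, x⟩) c * v c) = 0
        have hent : ∀ c : Edge (m+1) × Fin k,
            ((Mt F n m k Ifin).map (MvPolynomial.eval α)) (Sum.inr ⟨e, x⟩) c =
            if e = c.1 then (α x.1) ^ (c.2 : ℕ) else 0 := by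
          intro c
          have hMt : Mt F n m k Ifin (Sum.inr ⟨e, x⟩) c =
              if e = c.1 then MvPolynomial.X x.1 ^ (c.2 : ℕ) else 0 := rfl
          rw [Matrix.map_apply, hMt, apply_ite (MvPolynomial.eval α), map_zero, map_pow,
            MvPolynomial.eval_X]
        simp only [hent]
        rw [Fintype.sum_prod_type]
        rw [Finset.sum_eq_single e]
        · have : (∑ b : Fin k, (if e = e then (α x.1) ^ (b:ℕ) else 0) * v (e, b))
              = (g e).eval (α x.1) := by
            rw [Polynomial.eval_eq_sum_range' (hgdeg e) (α x.1),
              ← Fin.sum_univ_eq_sum_range (fun i => (g e).coeff i * (α x.1) ^ i) k]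
            refine Finset.sum_congr rfl fun b _ => ?_
            rw [if_pos rfl, hv, mul_comm]
          rw [this, hgval e x.1 x.2]
        · intro e' _ hne
          refine Finset.sum_eq_zero fun b _ => ?_
          rw [if_neg (fun hh => hne hh.symm), zero_mul]
        · intro hh
          exact absurd (Finset.mem_univ e) hh
end
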